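/- Let l ∈ ℕ and let f : (0,∞) → ℝ be twice differentiable with f''(ζ) = (1 + l(l+1)/ζ²)·f(ζ) for all ζ > 0, and suppose e^ζ·f(ζ) → 1 as ζ → ∞. Define 𝒢₀(ζ,η) = (η^{l+1}·ζ^{−l} − ζ^{l+1}·η^{−l})/(2l+1) and its ζ-derivative ∂_ζ𝒢₀(ζ,η) = (−l·η^{l+1}·ζ^{−l−1} − (l+1)·ζ^{l}·η^{−l})/(2l+1). Then for every ζ > 0 the following integrals converge and ∫_ζ^∞ 𝒢₀(ζ,η)·f(η) dη = f(ζ) and ∫_ζ^∞ ∂_ζ𝒢₀(ζ,η)·f(η) dη = f'(ζ). -/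

import Mathlib

open MeasureTheory
open Set Filter

lemma pow_exp_int (n : ℕ) {a : ℝ} (ha : 0 < a) :
    IntegrableOn (fun x : ℝ => x ^ n * Real.exp (-x)) (Set.Ioi a) := by
  have h := Real.GammaIntegral_convergent (s := (n : ℝ) + 1) (by positivity)
  have h2 : IntegrableOn (fun x : ℝ => Real.exp (-x) * x ^ ((n : ℝ) + 1 - 1)) (Set.Ioi a) :=
    h.mono_set (Set.Ioi_subset_Ioi ha.le)
  refine h2.congr_fun (fun x hx => ?_) measurableSet_Ioi
  have hx0 : (0:ℝ) < x := lt_trans ha hx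
  beta_reduce
  rw [add_sub_cancel_right, Real.rpow_natCast, mul_comm]

-- decay of f
lemma f_decay (f : ℝ → ℝ)
    (hlim : Filter.Tendsto (fun ζ : ℝ => Real.exp ζ * f ζ) Filter.atTop (nhds 1)) :
    ∃ A : ℝ, 1 ≤ A ∧ ∀ η ≥ A, |f η| ≤ 2 * Real.exp (-η) := by
  have h := Metric.tendsto_atTop.1 hlim 1 one_pos
  obtain ⟨A₀, hA₀⟩ := h
  refine ⟨max A₀ 1, le_max_right _ _, fun η hη => ?_⟩
  have h1 := hA₀ η (le_trans (le_max_left _ _) hη)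
  rw [Real.dist_eq] at h1
  have h2 : |Real.exp η * f η| ≤ 2 := by
    have := abs_sub_abs_le_abs_sub (Real.exp η * f η) 1
    simp only [abs_one] at this
    linarith [this, h1.le]
  rw [abs_mul, Real.abs_exp] at h2
  have he : (0:ℝ) < Real.exp η := Real.exp_pos η
  rw [Real.exp_neg]
  rw [ge_iff_le] at hη
  calc |f η| = (Real.exp η * |f η|) / Real.exp η := by field_simp
    _ ≤ 2 / Real.exp η := by gcongr
    _ = 2 * (Real.exp η)⁻¹ := by ring

lemma fp_decay (l : ℕ) (f f' f'' : ℝ → ℝ)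
    (hf : ∀ ζ ∈ Set.Ioi (0 : ℝ), HasDerivAt f (f' ζ) ζ)
    (hf' : ∀ ζ ∈ Set.Ioi (0 : ℝ), HasDerivAt f' (f'' ζ) ζ)
    (hode : ∀ ζ ∈ Set.Ioi (0 : ℝ), f'' ζ = (1 + (l * (l + 1) : ℝ) / ζ ^ 2) * f ζ)
    (hlim : Filter.Tendsto (fun ζ : ℝ => Real.exp ζ * f ζ) Filter.atTop (nhds 1)) :
    ∃ A : ℝ, 1 ≤ A ∧ ∀ η ≥ A, |f η| ≤ 2 * Real.exp (-η) ∧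
      |f' η| ≤ (2 * (1 + (l * (l + 1) : ℝ))) * Real.exp (-η) := by
  obtain ⟨A, hA1, hAf⟩ := f_decay f hlim
  set K : ℝ := 1 + (l * (l + 1) : ℝ) with hK
  have hK1 : (1:ℝ) ≤ K := by
    have : (0:ℝ) ≤ (l * (l + 1) : ℝ) := by positivity
    linarith
  have hcf : ContinuousOn f (Set.Ioi 0) := fun x hx =>
    (hf x hx).continuousAt.continuousWithinAt
  have hcf' : ContinuousOn f' (Set.Ioi 0) := fun x hx =>
    (hf' x hx).continuousAt.continuousWithinAt
  have hcf'' : ContinuousOn f'' (Set.Ioi 0) := by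
    have : ContinuousOn (fun x : ℝ => (1 + (l * (l + 1) : ℝ) / x ^ 2) * f x) (Set.Ioi 0) := by
      apply ContinuousOn.mul _ hcf
      apply ContinuousOn.add continuousOn_const
      exact ContinuousOn.div continuousOn_const (by fun_prop)
        (fun x hx => pow_ne_zero _ (ne_of_gt hx))
    exact this.congr hode
  -- bound on f''
  have hf''b : ∀ x ≥ A, |f'' x| ≤ 2 * K * Real.exp (-x) := by
    intro x hx
    have hx1 : (1:ℝ) ≤ x := le_trans hA1 hx
    have hx0 : (0:ℝ) < x := lt_of_lt_of_le one_pos hx1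
    rw [hode x hx0]
    have h1 : |1 + (l * (l + 1) : ℝ) / x ^ 2| ≤ K := by
      rw [abs_of_nonneg (by positivity)]
      have : (l * (l + 1) : ℝ) / x ^ 2 ≤ (l * (l + 1) : ℝ) := by
        apply div_le_self (by positivity)
        nlinarith
      linarith
    calc |(1 + (l * (l + 1) : ℝ) / x ^ 2) * f x|
        = |1 + (l * (l + 1) : ℝ) / x ^ 2| * |f x| := abs_mul _ _
      _ ≤ K * (2 * Real.exp (-x)) := by
          apply mul_le_mul h1 (hAf x hx) (abs_nonneg _) (by linarith)
      _ = 2 * K * Real.exp (-x) := by ring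
  -- integrability of f'' on Ioi a for a ≥ A
  have hbint : ∀ a : ℝ, IntegrableOn (fun x : ℝ => 2 * K * Real.exp (-x)) (Set.Ioi a) := by
    intro a
    have h := (exp_neg_integrableOn_Ioi a one_pos).const_mul (2 * K)
    refine IntegrableOn.congr_fun h (fun x _ => ?_) measurableSet_Ioi
    simp [neg_one_mul]
  have hint : ∀ a ≥ A, IntegrableOn f'' (Set.Ioi a) := by
    intro a ha
    have ha0 : (0:ℝ) < a := lt_of_lt_of_le one_pos (le_trans hA1 ha)
    refine Integrable.mono' (hbint a)
      ((hcf''.mono (Set.Ioi_subset_Ioi ha0.le)).aestronglyMeasurable measurableSet_Ioi) ?_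
    refine (ae_restrict_iff' measurableSet_Ioi).2 (Filter.Eventually.of_forall fun x hx => ?_)
    exact hf''b x (le_trans ha (le_of_lt hx))
  -- FTC for f' on [a, b] with A ≤ a
  have hftc : ∀ a b : ℝ, A ≤ a → a ≤ b → ∫ x in a..b, f'' x = f' b - f' a := by
    intro a b ha hab
    have ha0 : (0:ℝ) < a := lt_of_lt_of_le one_pos (le_trans hA1 ha)
    have hsub : Set.uIcc a b ⊆ Set.Ioi 0 := by
      rw [Set.uIcc_of_le hab]
      intro x hx; exact lt_of_lt_of_le ha0 hx.1
    refine intervalIntegral.integral_eq_sub_of_hasDerivAt (fun x hx => hf' x (hsub hx)) ?_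
    exact (hcf''.mono hsub).intervalIntegrable
  -- f' tends to a limit L at infinity
  set L : ℝ := f' A + ∫ x in Set.Ioi A, f'' x with hL
  have hA0 : (0:ℝ) < A := lt_of_lt_of_le one_pos hA1
  have htendL : Filter.Tendsto f' Filter.atTop (nhds L) := by
    have h1 : Filter.Tendsto (fun b => ∫ x in A..b, f'' x) Filter.atTop
        (nhds (∫ x in Set.Ioi A, f'' x)) :=
      intervalIntegral_tendsto_integral_Ioi A (hint A le_rfl) Filter.tendsto_id
    have h2 : Filter.Tendsto (fun b => f' A + ∫ x in A..b, f'' x) Filter.atTop (nhds L) :=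
      h1.const_add _
    refine h2.congr' ?_
    filter_upwards [Filter.eventually_ge_atTop A] with b hb
    rw [hftc A b le_rfl hb]; ring
  -- f tends to 0
  have hf0 : Filter.Tendsto f Filter.atTop (nhds 0) := by
    have h1 : Filter.Tendsto (fun x : ℝ => Real.exp (-x) * (Real.exp x * f x))
        Filter.atTop (nhds (0 * 1)) :=
      (Real.tendsto_exp_neg_atTop_nhds_zero).mul hlim
    rw [zero_mul] at h1
    refine h1.congr (fun x => ?_)
    rw [← mul_assoc, ← Real.exp_add, neg_add_cancel, Real.exp_zero, one_mul]
  -- L = 0 via MVT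
  have hL0 : L = 0 := by
    have hc : ∀ n : ℕ, ∃ c ∈ Set.Ioo (A + n) (A + n + 1),
        f' c = f (A + n + 1) - f (A + n) := by
      intro n
      have hab : A + (n:ℝ) < A + n + 1 := by linarith
      have hsub : Set.Icc (A + (n:ℝ)) (A + n + 1) ⊆ Set.Ioi 0 := by
        intro x hx
        have : (0:ℝ) < A + n := by positivity
        exact lt_of_lt_of_le this hx.1
      obtain ⟨c, hc1, hc2⟩ := exists_hasDerivAt_eq_slope f f' hab
        (hcf.mono hsub) (fun x hx => hf x (hsub (Set.Ioo_subset_Icc_self hx)))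
      refine ⟨c, hc1, ?_⟩
      rw [hc2]; field_simp; ring
    choose c hc1 hc2 using hc
    have hcA : Filter.Tendsto c Filter.atTop Filter.atTop := by
      apply Filter.tendsto_atTop_mono (fun n => (hc1 n).1.le)
      apply Filter.tendsto_atTop_add_const_left
      exact tendsto_natCast_atTop_atTop
    have h1 : Filter.Tendsto (fun n => f' (c n)) Filter.atTop (nhds L) :=
      htendL.comp hcA
    have h2 : Filter.Tendsto (fun n => f' (c n)) Filter.atTop (nhds 0) := by
      have ha : Filter.Tendsto (fun n : ℕ => f (A + n + 1)) Filter.atTop (nhds 0) := by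
        apply hf0.comp
        apply Filter.tendsto_atTop_add_const_right
        apply Filter.tendsto_atTop_add_const_left
        exact tendsto_natCast_atTop_atTop
      have hb : Filter.Tendsto (fun n : ℕ => f (A + n)) Filter.atTop (nhds 0) := by
        apply hf0.comp
        apply Filter.tendsto_atTop_add_const_left
        exact tendsto_natCast_atTop_atTop
      have := ha.sub hb
      rw [sub_zero] at this
      exact this.congr (fun n => (hc2 n).symm)
    exact tendsto_nhds_unique h1 h2
  rw [hL0] at htendL
  -- conclude
  refine ⟨A, hA1, fun η hη => ⟨hAf η hη, ?_⟩⟩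
  have hη0 : (0:ℝ) < η := lt_of_lt_of_le one_pos (le_trans hA1 hη)
  have key : f' η = - ∫ x in Set.Ioi η, f'' x := by
    have h1 : Filter.Tendsto (fun b => ∫ x in η..b, f'' x) Filter.atTop
        (nhds (∫ x in Set.Ioi η, f'' x)) :=
      intervalIntegral_tendsto_integral_Ioi η (hint η hη) Filter.tendsto_id
    have h2 : Filter.Tendsto (fun b => f' b - f' η) Filter.atTop (nhds (0 - f' η)) :=
      htendL.sub_const _
    rw [zero_sub] at h2
    have h3 : Filter.Tendsto (fun b => ∫ x in η..b, f'' x) Filter.atTop (nhds (- f' η)) := by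
      refine h2.congr' ?_
      filter_upwards [Filter.eventually_ge_atTop η] with b hb
      rw [hftc η b hη hb]
    have := tendsto_nhds_unique h1 h3
    linarith
  rw [key, abs_neg]
  calc |∫ x in Set.Ioi η, f'' x| ≤ ∫ x in Set.Ioi η, 2 * K * Real.exp (-x) := by
        rw [← Real.norm_eq_abs]
        refine norm_integral_le_of_norm_le (hbint η) ?_
        refine (ae_restrict_iff' measurableSet_Ioi).2 (Filter.Eventually.of_forall fun x hx => ?_)
        exact hf''b x (le_trans hη (le_of_lt hx))
    _ = 2 * K * Real.exp (-η) := by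
        rw [MeasureTheory.integral_const_mul, integral_exp_neg_Ioi]

set_option maxHeartbeats 1000000 in
lemma key_green (l : ℕ) (f f' f'' : ℝ → ℝ)
    (hf : ∀ ζ ∈ Set.Ioi (0 : ℝ), HasDerivAt f (f' ζ) ζ)
    (hf' : ∀ ζ ∈ Set.Ioi (0 : ℝ), HasDerivAt f' (f'' ζ) ζ)
    (hode : ∀ ζ ∈ Set.Ioi (0 : ℝ), f'' ζ = (1 + (l * (l + 1) : ℝ) / ζ ^ 2) * f ζ)
    (Af Cf : ℝ) (hAf1 : 1 ≤ Af) (hCf : 0 < Cf)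
    (hdecay : ∀ η ≥ Af, |f η| ≤ Cf * Real.exp (-η) ∧ |f' η| ≤ Cf * Real.exp (-η))
    (ζ : ℝ) (hζ : 0 < ζ) (a b : ℝ) :
    IntegrableOn (fun η : ℝ => (a * η ^ ((l:ℤ)+1) + b * η ^ (-(l:ℤ))) * f η) (Set.Ioi ζ) ∧
    ∫ η in Set.Ioi ζ, (a * η ^ ((l:ℤ)+1) + b * η ^ (-(l:ℤ))) * f η
      = (a * ((l:ℝ)+1) * ζ ^ (l:ℤ) + b * (-(l:ℝ)) * ζ ^ (-(l:ℤ)-1)) * f ζ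
        - (a * ζ ^ ((l:ℤ)+1) + b * ζ ^ (-(l:ℤ))) * f' ζ := by
  set g : ℝ → ℝ := fun η => a * η ^ ((l:ℤ)+1) + b * η ^ (-(l:ℤ)) with hgdef
  set g' : ℝ → ℝ := fun η => a * ((l:ℝ)+1) * η ^ (l:ℤ) + b * (-(l:ℝ)) * η ^ (-(l:ℤ)-1)
    with hg'def
  set g'' : ℝ → ℝ := fun η =>
    a * ((l:ℝ)+1) * (l:ℝ) * η ^ ((l:ℤ)-1) + b * (-(l:ℝ)) * (-(l:ℝ)-1) * η ^ (-(l:ℤ)-2)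
    with hg''def
  have hg : ∀ η ∈ Set.Ioi (0:ℝ), HasDerivAt g (g' η) η := by
    intro η hη
    have hη0 : η ≠ 0 := ne_of_gt hη
    have h1 := ((hasDerivAt_zpow ((l:ℤ)+1) η (Or.inl hη0)).const_mul a).add
      ((hasDerivAt_zpow (-(l:ℤ)) η (Or.inl hη0)).const_mul b)
    refine h1.congr_deriv ?_
    have e1 : (l:ℤ) + 1 - 1 = (l:ℤ) := by ring
    rw [e1]
    push_cast
    ring
  have hg' : ∀ η ∈ Set.Ioi (0:ℝ), HasDerivAt g' (g'' η) η := by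
    intro η hη
    have hη0 : η ≠ 0 := ne_of_gt hη
    have h1 := ((hasDerivAt_zpow ((l:ℤ)) η (Or.inl hη0)).const_mul (a * ((l:ℝ)+1))).add
      ((hasDerivAt_zpow (-(l:ℤ)-1) η (Or.inl hη0)).const_mul (b * (-(l:ℝ))))
    refine h1.congr_deriv ?_
    have e1 : -(l:ℤ) - 1 - 1 = -(l:ℤ) - 2 := by ring
    rw [e1]
    push_cast
    ring
  have hgode : ∀ η ∈ Set.Ioi (0:ℝ), g'' η = ((l * (l + 1) : ℝ) / η ^ 2) * g η := by
    intro η hη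
    have hη0 : η ≠ 0 := ne_of_gt hη
    simp only [hg''def, hgdef]
    have e1 : ((l:ℤ)) - 1 = ((l:ℤ)+1) - 2 := by ring
    have e2 : -(l:ℤ) - 2 = -(l:ℤ) - 2 := rfl
    rw [e1, zpow_sub₀ hη0, show (-(l:ℤ) - 2) = -(l:ℤ) - 2 from rfl,
      zpow_sub₀ hη0 (-(l:ℤ)) 2]
    have e3 : (η : ℝ) ^ (2:ℤ) = η ^ (2:ℕ) := by
      rw [show (2:ℤ) = ((2:ℕ):ℤ) from rfl, zpow_natCast]
    rw [e3]
    field_simp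
    ring
  -- continuity
  have hcf : ContinuousOn f (Set.Ioi 0) := fun x hx =>
    (hf x hx).continuousAt.continuousWithinAt
  have hcf' : ContinuousOn f' (Set.Ioi 0) := fun x hx =>
    (hf' x hx).continuousAt.continuousWithinAt
  have hcg : ContinuousOn g (Set.Ioi 0) := fun x hx =>
    (hg x hx).continuousAt.continuousWithinAt
  have hcg' : ContinuousOn g' (Set.Ioi 0) := fun x hx =>
    (hg' x hx).continuousAt.continuousWithinAt
  have hcgf : ContinuousOn (fun η => g η * f η) (Set.Ioi 0) := hcg.mul hcf
  -- the Wronskian-type function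
  set W : ℝ → ℝ := fun η => g η * f' η - g' η * f η with hWdef
  have hW : ∀ η ∈ Set.Ioi (0:ℝ), HasDerivAt W (g η * f η) η := by
    intro η hη
    have h1 := ((hg η hη).mul (hf' η hη)).sub ((hg' η hη).mul (hf η hη))
    refine h1.congr_deriv ?_
    rw [hode η hη, hgode η hη]
    ring
  -- big constants
  set M : ℝ := max (max ζ 1) Af with hMdef
  have hζM : ζ ≤ M := le_trans (le_max_left _ _) (le_max_left _ _)
  have h1M : (1:ℝ) ≤ M := le_trans (le_max_right ζ 1) (le_max_left _ _)
  have hAfM : Af ≤ M := le_max_right _ _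
  have hM0 : (0:ℝ) < M := lt_of_lt_of_le one_pos h1M
  set Cg : ℝ := |a| * ((l:ℝ)+1) + |b| * ((l:ℝ)+1) with hCgdef
  have hCg0 : 0 < Cg + 1 := by positivity
  -- polynomial bounds for g, g' beyond M
  have hgb : ∀ η ≥ M, |g η| ≤ Cg * η ^ (l+1) ∧ |g' η| ≤ Cg * η ^ (l+1) := by
    intro η hη
    have hη1 : (1:ℝ) ≤ η := le_trans h1M hη
    have hη0 : (0:ℝ) < η := lt_of_lt_of_le one_pos hη1
    have hb : ∀ k : ℤ, k ≤ (l:ℤ)+1 → |η ^ k| ≤ η ^ (l+1) := by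
      intro k hk
      rw [abs_of_nonneg (zpow_nonneg hη0.le k)]
      calc η ^ k ≤ η ^ ((l:ℤ)+1) := zpow_le_zpow_right₀ hη1 hk
        _ = η ^ (l+1) := by
            rw [show ((l:ℤ)+1) = ((l+1 : ℕ):ℤ) by push_cast; ring, zpow_natCast]
    have hl1 : (0:ℝ) ≤ (l:ℝ) + 1 := by positivity
    have h0 : (0:ℝ) ≤ η ^ (l+1) := by positivity
    have hl0 : (0:ℝ) ≤ (l:ℝ) := Nat.cast_nonneg l
    constructor
    · calc |g η| ≤ |a * η ^ ((l:ℤ)+1)| + |b * η ^ (-(l:ℤ))| := abs_add_le _ _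
        _ = |a| * |η ^ ((l:ℤ)+1)| + |b| * |η ^ (-(l:ℤ))| := by rw [abs_mul, abs_mul]
        _ ≤ |a| * η ^ (l+1) + |b| * η ^ (l+1) := by
            gcongr
            · exact hb _ le_rfl
            · exact hb _ (by omega)
        _ ≤ Cg * η ^ (l+1) := by
            rw [hCgdef]
            nlinarith [mul_nonneg (mul_nonneg hl0 (abs_nonneg a)) h0,
              mul_nonneg (mul_nonneg hl0 (abs_nonneg b)) h0]
    · calc |g' η| ≤ |a * ((l:ℝ)+1) * η ^ ((l:ℤ))| + |b * (-(l:ℝ)) * η ^ (-(l:ℤ)-1)| :=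
            abs_add_le _ _
        _ = |a| * ((l:ℝ)+1) * |η ^ ((l:ℤ))| + |b| * (l:ℝ) * |η ^ (-(l:ℤ)-1)| := by
            rw [abs_mul, abs_mul, abs_mul, abs_mul, abs_neg, abs_of_nonneg hl1,
              abs_of_nonneg hl0]
        _ ≤ |a| * ((l:ℝ)+1) * η ^ (l+1) + |b| * (l:ℝ) * η ^ (l+1) := by
            gcongr
            · exact hb _ (by omega)
            · exact hb _ (by omega)
        _ ≤ Cg * η ^ (l+1) := by
            rw [hCgdef]
            nlinarith [mul_nonneg (abs_nonneg b) h0]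
  -- integrability
  have hIccsub : Set.Icc ζ M ⊆ Set.Ioi 0 := fun x hx => lt_of_lt_of_le hζ hx.1
  have hint1 : IntegrableOn (fun η => g η * f η) (Set.Ioc ζ M) :=
    ((hcgf.mono hIccsub).integrableOn_Icc).mono_set Set.Ioc_subset_Icc_self
  have hint2 : IntegrableOn (fun η => g η * f η) (Set.Ioi M) := by
    have hMsub : Set.Ioi M ⊆ Set.Ioi (0:ℝ) := Set.Ioi_subset_Ioi hM0.le
    have hbd : IntegrableOn (fun x : ℝ => Cg * Cf * (x ^ (l+1) * Real.exp (-x)))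
        (Set.Ioi M) := (pow_exp_int (l+1) hM0).const_mul (Cg * Cf)
    refine Integrable.mono' hbd
      ((hcgf.mono hMsub).aestronglyMeasurable measurableSet_Ioi) ?_
    refine (ae_restrict_iff' measurableSet_Ioi).2 (Filter.Eventually.of_forall fun x hx => ?_)
    have hx1 : M ≤ x := le_of_lt hx
    have hgx := (hgb x hx1).1
    have hfx := (hdecay x (le_trans hAfM hx1)).1
    have h1 : ‖g x * f x‖ = |g x| * |f x| := by rw [norm_mul]; rfl
    rw [h1]
    calc |g x| * |f x| ≤ (Cg * x ^ (l+1)) * (Cf * Real.exp (-x)) := by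
          apply mul_le_mul hgx hfx (abs_nonneg _) (le_trans (abs_nonneg _) hgx)
      _ = Cg * Cf * (x ^ (l+1) * Real.exp (-x)) := by ring
  have hintegrable : IntegrableOn (fun η => g η * f η) (Set.Ioi ζ) := by
    rw [← Set.Ioc_union_Ioi_eq_Ioi hζM]
    exact hint1.union hint2
  -- FTC
  have hftc : ∀ y, ζ ≤ y → ∫ x in ζ..y, g x * f x = W y - W ζ := by
    intro y hy
    have hsub : Set.uIcc ζ y ⊆ Set.Ioi 0 := by
      rw [Set.uIcc_of_le hy]
      exact fun x hx => lt_of_lt_of_le hζ hx.1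
    exact intervalIntegral.integral_eq_sub_of_hasDerivAt (fun x hx => hW x (hsub hx))
      ((hcgf.mono hsub).intervalIntegrable)
  -- W tends to 0
  have hWlim : Filter.Tendsto W Filter.atTop (nhds 0) := by
    rw [tendsto_zero_iff_abs_tendsto_zero]
    have hb : Filter.Tendsto (fun y : ℝ => 2 * Cg * Cf * (y ^ (l+1) * Real.exp (-y)))
        Filter.atTop (nhds 0) := by
      have := (Real.tendsto_pow_mul_exp_neg_atTop_nhds_zero (l+1)).const_mul (2 * Cg * Cf)
      rwa [mul_zero] at this
    refine squeeze_zero' (Filter.Eventually.of_forall fun y => abs_nonneg _) ?_ hb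
    filter_upwards [Filter.eventually_ge_atTop M] with y hy
    have hgy := (hgb y hy).1
    have hg'y := (hgb y hy).2
    have hfy := (hdecay y (le_trans hAfM hy)).1
    have hf'y := (hdecay y (le_trans hAfM hy)).2
    calc |W y| ≤ |g y * f' y| + |g' y * f y| := by
          simpa [hWdef] using abs_sub (g y * f' y) (g' y * f y)
      _ = |g y| * |f' y| + |g' y| * |f y| := by rw [abs_mul, abs_mul]
      _ ≤ (Cg * y ^ (l+1)) * (Cf * Real.exp (-y)) + (Cg * y ^ (l+1)) * (Cf * Real.exp (-y)) :=
          add_le_add (mul_le_mul hgy hf'y (abs_nonneg _) (le_trans (abs_nonneg _) hgy))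
            (mul_le_mul hg'y hfy (abs_nonneg _) (le_trans (abs_nonneg _) hg'y))
      _ = 2 * Cg * Cf * (y ^ (l+1) * Real.exp (-y)) := by ring
  -- conclude
  have h1 : Filter.Tendsto (fun y => ∫ x in ζ..y, g x * f x) Filter.atTop
      (nhds (∫ η in Set.Ioi ζ, g η * f η)) :=
    intervalIntegral_tendsto_integral_Ioi ζ hintegrable Filter.tendsto_id
  have h2 : Filter.Tendsto (fun y => ∫ x in ζ..y, g x * f x) Filter.atTop (nhds (0 - W ζ)) := by
    refine (hWlim.sub_const (W ζ)).congr' ?_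
    filter_upwards [Filter.eventually_ge_atTop ζ] with y hy
    exact (hftc y hy).symm
  have hval : ∫ η in Set.Ioi ζ, g η * f η = - W ζ := by
    have := tendsto_nhds_unique h1 h2
    rw [this, zero_sub]
  refine ⟨hintegrable, ?_⟩
  rw [hval, hWdef]
  simp only [hgdef, hg'def]
  ring

/-- Lemma 46 reformulated: if `f'' = (1 + l(l+1)/ζ²) f` on `(0,∞)` and `e^ζ f(ζ) → 1` at
infinity, then for every `ζ > 0` the Green's-function integrals
`∫_ζ^∞ 𝒢₀(ζ,η) f(η) dη = f(ζ)` and `∫_ζ^∞ ∂_ζ𝒢₀(ζ,η) f(η) dη = f'(ζ)`, where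
`𝒢₀(ζ,η) = (η^{l+1} ζ^{-l} - ζ^{l+1} η^{-l})/(2l+1)`. -/
theorem stmt_6 (l : ℕ) (f f' f'' : ℝ → ℝ)
    (hf : ∀ ζ ∈ Set.Ioi (0 : ℝ), HasDerivAt f (f' ζ) ζ)
    (hf' : ∀ ζ ∈ Set.Ioi (0 : ℝ), HasDerivAt f' (f'' ζ) ζ)
    (hode : ∀ ζ ∈ Set.Ioi (0 : ℝ), f'' ζ = (1 + (l * (l + 1) : ℝ) / ζ ^ 2) * f ζ)
    (hlim : Filter.Tendsto (fun ζ : ℝ => Real.exp ζ * f ζ) Filter.atTop (nhds 1)) :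
    ∀ ζ ∈ Set.Ioi (0 : ℝ),
      (IntegrableOn
        (fun η : ℝ => (η ^ (l + 1) / ζ ^ l - ζ ^ (l + 1) / η ^ l) / (2 * (l : ℝ) + 1) * f η)
        (Set.Ioi ζ) volume ∧
       ∫ η in Set.Ioi ζ,
          (η ^ (l + 1) / ζ ^ l - ζ ^ (l + 1) / η ^ l) / (2 * (l : ℝ) + 1) * f η = f ζ) ∧
      (IntegrableOn
        (fun η : ℝ =>
          (-(l : ℝ) * η ^ (l + 1) / ζ ^ (l + 1) - ((l : ℝ) + 1) * ζ ^ l / η ^ l) /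
            (2 * (l : ℝ) + 1) * f η)
        (Set.Ioi ζ) volume ∧
       ∫ η in Set.Ioi ζ,
          (-(l : ℝ) * η ^ (l + 1) / ζ ^ (l + 1) - ((l : ℝ) + 1) * ζ ^ l / η ^ l) /
            (2 * (l : ℝ) + 1) * f η = f' ζ) := by
  obtain ⟨A, hA1, hd⟩ := fp_decay l f f' f'' hf hf' hode hlim
  set Cf : ℝ := 2 * (1 + (l * (l + 1) : ℝ)) with hCfdef
  have hCf : 0 < Cf := by positivity
  have hdecay : ∀ η ≥ A, |f η| ≤ Cf * Real.exp (-η) ∧ |f' η| ≤ Cf * Real.exp (-η) := by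
    intro η hη
    refine ⟨le_trans (hd η hη).1 ?_, (hd η hη).2⟩
    have : (0:ℝ) ≤ (l * (l + 1) : ℝ) := by positivity
    nlinarith [Real.exp_pos (-η)]
  -- zpow conversions
  have hz1 : ∀ x : ℝ, x ^ ((l:ℤ)+1) = x ^ (l+1) := fun x => by
    rw [show ((l:ℤ)+1) = ((l+1 : ℕ) : ℤ) by push_cast; ring, zpow_natCast]
  have hz2 : ∀ x : ℝ, x ^ (-(l:ℤ)) = (x ^ l)⁻¹ := fun x => by
    rw [zpow_neg, zpow_natCast]
  have hz3 : ∀ x : ℝ, x ^ (-(l:ℤ)-1) = (x ^ (l+1))⁻¹ := fun x => by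
    rw [show (-(l:ℤ)-1) = -((l+1 : ℕ) : ℤ) by push_cast; ring, zpow_neg, zpow_natCast]
  have hz4 : ∀ x : ℝ, x ^ ((l:ℤ)) = x ^ l := fun x => by rw [zpow_natCast]
  have h2l : (2 * (l:ℝ) + 1) ≠ 0 := by positivity
  intro ζ hζ
  have hζ0 : (0:ℝ) < ζ := hζ
  have hζne : ζ ≠ 0 := ne_of_gt hζ0
  constructor
  · -- first identity
    set a₁ : ℝ := 1 / (ζ ^ l * (2 * (l:ℝ) + 1)) with ha₁
    set b₁ : ℝ := -ζ ^ (l+1) / (2 * (l:ℝ) + 1) with hb₁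
    have hk := key_green l f f' f'' hf hf' hode A Cf hA1 hCf hdecay ζ hζ0 a₁ b₁
    have heq : Set.EqOn
        (fun η : ℝ => (a₁ * η ^ ((l:ℤ)+1) + b₁ * η ^ (-(l:ℤ))) * f η)
        (fun η : ℝ => (η ^ (l + 1) / ζ ^ l - ζ ^ (l + 1) / η ^ l) / (2 * (l : ℝ) + 1) * f η)
        (Set.Ioi ζ) := by
      intro η hη
      have hη0 : (0:ℝ) < η := lt_trans hζ0 hη
      have hηne : η ≠ 0 := ne_of_gt hη0
      simp only
      rw [hz1, hz2, ha₁, hb₁]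
      field_simp
      ring
    refine ⟨hk.1.congr_fun heq measurableSet_Ioi, ?_⟩
    rw [← setIntegral_congr_fun measurableSet_Ioi heq, hk.2, hz1, hz2, hz3, hz4, ha₁, hb₁]
    field_simp
    ring
  · -- second identity
    set a₂ : ℝ := -(l:ℝ) / (ζ ^ (l+1) * (2 * (l:ℝ) + 1)) with ha₂
    set b₂ : ℝ := -((l:ℝ)+1) * ζ ^ l / (2 * (l:ℝ) + 1) with hb₂
    have hk := key_green l f f' f'' hf hf' hode A Cf hA1 hCf hdecay ζ hζ0 a₂ b₂
    have heq : Set.EqOn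
        (fun η : ℝ => (a₂ * η ^ ((l:ℤ)+1) + b₂ * η ^ (-(l:ℤ))) * f η)
        (fun η : ℝ =>
          (-(l : ℝ) * η ^ (l + 1) / ζ ^ (l + 1) - ((l : ℝ) + 1) * ζ ^ l / η ^ l) /
            (2 * (l : ℝ) + 1) * f η)
        (Set.Ioi ζ) := by
      intro η hη
      have hη0 : (0:ℝ) < η := lt_trans hζ0 hη
      have hηne : η ≠ 0 := ne_of_gt hη0
      simp only
      rw [hz1, hz2, ha₂, hb₂]
      field_simp
      ring
    refine ⟨hk.1.congr_fun heq measurableSet_Ioi, ?_⟩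
    rw [← setIntegral_congr_fun measurableSet_Ioi heq, hk.2, hz1, hz2, hz3, hz4, ha₂, hb₂]
    field_simp
    ring
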